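/- Let s > 1, t > 0, s + t > 1, t ≠ 1, and let p(h) = p_{x,y}(h) for x = s/(s+t), y = t/(s+t) (the intersection of the diagonals). Then p(h) = (4st(s+t-1)/(s+t)^2)·(2h-1)(2h-s), the critical point of p is h₀ = (s+1)/4, and 1/2 < h₀ < s/2. -/

import Mathlib

theorem stmt_9 (s t : ℝ) (hs : 1 < s) (ht : 0 < t) (hst : 1 < s + t) (ht1 : t ≠ 1)
    (x y : ℝ) (hx : x = s/(s+t)) (hy : y = t/(s+t))
    (f : ℝ) (hf : f = ((t-1)*x - (s-1)*y)^2 + 2*(t-1)*x + 2*(s-1)*y + 1)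
    (p : ℝ → ℝ)
    (hp : ∀ h, p h = 4*f*h^2
      + 4*(((t-1)*x+1)*((s-t)*x-s) - (s-1)*y*(s+(s-t+2)*x))*h
      + ((s-t)*x-s)^2 + 4*s*(s-1)*x*y)
    (h₀ : ℝ) (hh₀ : h₀ = (s+1)/4) :
    (∀ h, p h = (4*s*t*(s+t-1)/(s+t)^2)*(2*h-1)*(2*h-s)) ∧
    (deriv p) h₀ = 0 ∧ 1/2 < h₀ ∧ h₀ < s/2 := by
  have hst0 : s + t ≠ 0 := by positivity
  have key : ∀ h : ℝ, p h = (4*s*t*(s+t-1)/(s+t)^2)*(2*h-1)*(2*h-s) := by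
    intro h
    rw [hp, hf, hx, hy]
    field_simp
    ring
  refine ⟨key, ?_, ?_, ?_⟩
  · have hpe : p = fun h => (4*s*t*(s+t-1)/(s+t)^2)*(2*h-1)*(2*h-s) := funext key
    rw [hpe]
    have : deriv (fun h : ℝ => (4*s*t*(s+t-1)/(s+t)^2)*(2*h-1)*(2*h-s)) h₀
        = (4*s*t*(s+t-1)/(s+t)^2)*(2*(2*h₀-s) + (2*h₀-1)*2) := by
      set c := 4*s*t*(s+t-1)/(s+t)^2
      have h1 : HasDerivAt (fun h : ℝ => c*(2*h-1)*(2*h-s))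
          (c*2*(2*h₀-s) + c*(2*h₀-1)*2) h₀ := by
        have := ((hasDerivAt_id h₀).const_mul (2:ℝ)).sub_const 1
        have h2 := (((hasDerivAt_id h₀).const_mul (2:ℝ)).sub_const 1).const_mul c
        have h3 := ((hasDerivAt_id h₀).const_mul (2:ℝ)).sub_const s
        simpa [mul_comm, mul_assoc, mul_left_comm, Pi.mul_def] using h2.mul h3
      rw [h1.deriv]; ring
    rw [this, hh₀]; ring
  · rw [hh₀]; linarith
  · rw [hh₀]; linarith
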